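/- Let d ≥ 2 and let F ∈ ℝ^{d×d} with det F > 0, and let κ, ρ ∈ (1,∞). Then the κ-th power of the outer distortion K^O(F) = |F|^d / det F satisfies the bound (K^O(F))^κ ≤ C_ρ ( |F|^{dκρ} + (det F)^{−κρ/(ρ−1)} ) for a constant C_ρ depending only on ρ. Consequently, if p > d(d−1) and r > p(d−1)/(p−d(d−1)), then for every y ∈ W^{1,p}_+(Ω,ℝ^d) on a bounded Lipschitz domain Ω with 𝓔(y) = ∫_Ω |∇y|^p + ∫_Ω (det∇y)^{−r} < ∞, the outer distortion K^O(∇y) belongs to L^κ(Ω) with κ = (1/r + d/p)^{−1}, and this κ satisfies κ > d−1. -/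

import Mathlib

open MeasureTheory Filter Topology
open scoped ENNReal NNReal RealInnerProductSpace Classical

noncomputable section

/-- Euclidean space `ℝ^d`. -/
abbrev Euc (d : ℕ) : Type := EuclideanSpace ℝ (Fin d)

/-- The boundary of `Ω` is locally the graph boundary of a Lipschitz subgraph:
near each boundary point there are a unit direction `u` and a Lipschitz function `f`,
constant in the direction `u`, such that `Ω` is locally `{z : ⟪z,u⟫ < f z}`. -/
def HasLipschitzBoundary {d : ℕ} (Ω : Set (Euc d)) : Prop :=
  ∀ x ∈ frontier Ω, ∃ (u : Euc d) (f : Euc d → ℝ) (K : ℝ≥0) (ε : ℝ),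
    ‖u‖ = 1 ∧ LipschitzWith K f ∧ 0 < ε ∧
    (∀ (z : Euc d) (t : ℝ), f (z + t • u) = f z) ∧
    (∀ z ∈ Metric.ball x ε, (z ∈ Ω ↔ ⟪z, u⟫ < f z))

/-- A bounded Lipschitz domain in `ℝ^d`. -/
def IsLipschitzDomain {d : ℕ} (Ω : Set (Euc d)) : Prop :=
  IsOpen Ω ∧ Bornology.IsBounded Ω ∧ IsConnected Ω ∧ HasLipschitzBoundary Ω

/-- `ℝ^d ∖ ∂Ω` has exactly two connected components. -/
def TwoComplementComponents {d : ℕ} (Ω : Set (Euc d)) : Prop :=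
  Nat.card (ConnectedComponents ((frontier Ω)ᶜ : Set (Euc d))) = 2

/-- `G` is the weak (distributional) derivative of `y` on the open set `Ω`,
in the sense of integration by parts against smooth compactly supported test functions. -/
def IsWeakDeriv {d : ℕ} {F : Type} [NormedAddCommGroup F] [NormedSpace ℝ F]
    (Ω : Set (Euc d)) (y : Euc d → F) (G : Euc d → Euc d →L[ℝ] F) : Prop :=
  LocallyIntegrableOn y Ω volume ∧ LocallyIntegrableOn G Ω volume ∧
  ∀ φ : Euc d → ℝ, ContDiff ℝ (⊤ : ℕ∞) φ → HasCompactSupport φ → tsupport φ ⊆ Ω →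
    ∀ v : Euc d, ∫ x in Ω, fderiv ℝ φ x v • y x = - ∫ x in Ω, φ x • G x v

/-- Membership in the Sobolev space `W^{1,p}(Ω;F)`, recorded together with
an explicit weak derivative `G`. -/
def MemW1p {d : ℕ} {F : Type} [NormedAddCommGroup F] [NormedSpace ℝ F]
    (Ω : Set (Euc d)) (p : ℝ) (y : Euc d → F) (G : Euc d → Euc d →L[ℝ] F) : Prop :=
  AEStronglyMeasurable y (volume.restrict Ω) ∧
  AEStronglyMeasurable G (volume.restrict Ω) ∧
  (∫⁻ x in Ω, (‖y x‖₊ : ℝ≥0∞) ^ p) < ⊤ ∧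
  (∫⁻ x in Ω, (‖G x‖₊ : ℝ≥0∞) ^ p) < ⊤ ∧
  IsWeakDeriv Ω y G

/-- Pointwise Jacobian determinant `det ∇y` of a gradient field `G`. -/
def jac {d : ℕ} (G : Euc d → Euc d →L[ℝ] Euc d) (x : Euc d) : ℝ :=
  LinearMap.det ((G x) : Euc d →ₗ[ℝ] Euc d)

/-- Membership in `W^{1,p}_+(Ω;ℝ^d)`: Sobolev regularity plus `det ∇y > 0` a.e. -/
def MemW1pPlus {d : ℕ} (Ω : Set (Euc d)) (p : ℝ)
    (y : Euc d → Euc d) (G : Euc d → Euc d →L[ℝ] Euc d) : Prop :=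
  MemW1p Ω p y G ∧ ∀ᵐ x ∂(volume.restrict Ω), 0 < jac G x

/-- The neo-Hookean elastic energy
`𝓔(y) = ∫_Ω |∇y|^p dx + ∫_Ω (det ∇y)^{-r} dx`,
with the convention that the second integrand is `+∞` where `det ∇y ≤ 0`. -/
def elastic {d : ℕ} (Ω : Set (Euc d)) (p r : ℝ)
    (G : Euc d → Euc d →L[ℝ] Euc d) : ℝ≥0∞ :=
  (∫⁻ x in Ω, (‖G x‖₊ : ℝ≥0∞) ^ p) +
  ∫⁻ x in Ω, (if 0 < jac G x then ENNReal.ofReal (jac G x ^ (-r)) else (⊤ : ℝ≥0∞))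

/-- The bulk self-repulsion functional
`𝓓_U(y) = ∬_{U×U} |x-x̃|^q |y(x)-y(x̃)|^{-(d+sq)} |det∇y(x)| |det∇y(x̃)| dx dx̃`.
(The `ℝ≥0∞`-division gives value `0` whenever the numerator vanishes and `+∞`
whenever `y(x) = y(x̃)` but the numerator is positive.) -/
def bulkRep {d : ℕ} (U : Set (Euc d)) (q s : ℝ)
    (y : Euc d → Euc d) (G : Euc d → Euc d →L[ℝ] Euc d) : ℝ≥0∞ :=
  ∫⁻ x in U, ∫⁻ x' in U,
    ENNReal.ofReal (‖x - x'‖ ^ q * |jac G x| * |jac G x'|) /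
      ENNReal.ofReal (‖y x - y x'‖ ^ ((d : ℝ) + s * q))

/-- The surface self-repulsion functional on a set `Γ` (typically `Γ = ∂Ω`),
`𝓓̃_Γ(y) = ∬_{Γ×Γ} |x-x̃|^q |y(x)-y(x̃)|^{-(d-1+sq)} dA(x) dA(x̃)`,
with respect to the `(d-1)`-dimensional Hausdorff measure. -/
def surfRep {d : ℕ} (Γ : Set (Euc d)) (q s : ℝ) (y : Euc d → Euc d) : ℝ≥0∞ :=
  ∫⁻ x in Γ, (∫⁻ x' in Γ,
    ENNReal.ofReal (‖x - x'‖ ^ q) /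
      ENNReal.ofReal (‖y x - y x'‖ ^ ((d : ℝ) - 1 + s * q)) ∂μH[(d : ℝ) - 1]) ∂μH[(d : ℝ) - 1]

/-- Surface self-repulsion of a Sobolev map, evaluated on the continuous
representative (on `closure Ω`) of `y`; `+∞` if no such representative exists. -/
def surfRepC {d : ℕ} (Ω : Set (Euc d)) (q s : ℝ) (y : Euc d → Euc d) : ℝ≥0∞ :=
  ⨅ yc ∈ {f : Euc d → Euc d | ContinuousOn f (closure Ω) ∧ f =ᵐ[volume.restrict Ω] y},
    surfRep (frontier Ω) q s yc

/-- The Ciarlet–Nečas condition `∫_Ω |det ∇y| dx = |y(Ω)|` for the given representative. -/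
def CiarletNecas {d : ℕ} (Ω : Set (Euc d)) (y : Euc d → Euc d)
    (G : Euc d → Euc d →L[ℝ] Euc d) : Prop :=
  (∫⁻ x in Ω, ENNReal.ofReal |jac G x|) = volume (y '' Ω)

/-- The Ciarlet–Nečas condition, evaluated on the continuous representative of `y` on `Ω`. -/
def CiarletNecasC {d : ℕ} (Ω : Set (Euc d)) (y : Euc d → Euc d)
    (G : Euc d → Euc d →L[ℝ] Euc d) : Prop :=
  ∃ yc : Euc d → Euc d, ContinuousOn yc Ω ∧ yc =ᵐ[volume.restrict Ω] y ∧ CiarletNecas Ω yc G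

/-- A test function for weak `L^p` convergence: a member of `L^{p'}(Ω)`, `p' = p/(p-1)`. -/
def ConjLpTest {d : ℕ} (Ω : Set (Euc d)) (p : ℝ) (g : Euc d → ℝ) : Prop :=
  AEStronglyMeasurable g (volume.restrict Ω) ∧
  (∫⁻ x in Ω, (‖g x‖₊ : ℝ≥0∞) ^ (p / (p - 1))) < ⊤

/-- Weak convergence `y_k ⇀ y` in `W^{1,p}(Ω;ℝ^m)`: the functions and their weak
gradients converge weakly in `L^p`, i.e. tested against arbitrary `L^{p'}` functions. -/
def WeakConvW1p {d m : ℕ} (Ω : Set (Euc d)) (p : ℝ)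
    (y : ℕ → Euc d → Euc m) (G : ℕ → Euc d → Euc d →L[ℝ] Euc m)
    (ylim : Euc d → Euc m) (Glim : Euc d → Euc d →L[ℝ] Euc m) : Prop :=
  (∀ g : Euc d → ℝ, ConjLpTest Ω p g → ∀ w : Euc m,
    Tendsto (fun k => ∫ x in Ω, g x * ⟪y k x, w⟫) atTop
      (𝓝 (∫ x in Ω, g x * ⟪ylim x, w⟫))) ∧
  (∀ g : Euc d → ℝ, ConjLpTest Ω p g → ∀ (v : Euc d) (w : Euc m),
    Tendsto (fun k => ∫ x in Ω, g x * ⟪G k x v, w⟫) atTop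
      (𝓝 (∫ x in Ω, g x * ⟪Glim x v, w⟫)))

/-- The regularized energy `E_ε = 𝓔 + ε 𝓓_U` on `W^{1,p}_+`, `+∞` elsewhere. -/
def Eeps {d : ℕ} (Ω U : Set (Euc d)) (p r q s ε : ℝ)
    (y : Euc d → Euc d) (G : Euc d → Euc d →L[ℝ] Euc d) : ℝ≥0∞ :=
  if MemW1pPlus Ω p y G then elastic Ω p r G + ENNReal.ofReal ε * bulkRep U q s y G
  else ⊤

/-- The regularized energy `E_ε = 𝓔 + ε 𝓓̃_{∂Ω}` on `W^{1,p}_+`, `+∞` elsewhere. -/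
def EepsSurf {d : ℕ} (Ω : Set (Euc d)) (p r q s ε : ℝ)
    (y : Euc d → Euc d) (G : Euc d → Euc d →L[ℝ] Euc d) : ℝ≥0∞ :=
  if MemW1pPlus Ω p y G then elastic Ω p r G + ENNReal.ofReal ε * surfRepC Ω q s y
  else ⊤

/-- The limit energy `E_0`: the elastic energy on maps of `W^{1,p}_+` satisfying
the Ciarlet–Nečas condition, `+∞` elsewhere. -/
def Elimit {d : ℕ} (Ω : Set (Euc d)) (p r : ℝ)
    (y : Euc d → Euc d) (G : Euc d → Euc d →L[ℝ] Euc d) : ℝ≥0∞ :=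
  if MemW1pPlus Ω p y G ∧ CiarletNecasC Ω y G then elastic Ω p r G else ⊤

/-- The Γ-liminf inequality (w.r.t. weak `W^{1,p}` convergence) for a sequence of
functionals `Fk` with candidate limit `F0`. -/
def GammaLiminf {d : ℕ} (Ω : Set (Euc d)) (p : ℝ)
    (Fk : ℕ → (Euc d → Euc d) → (Euc d → Euc d →L[ℝ] Euc d) → ℝ≥0∞)
    (F0 : (Euc d → Euc d) → (Euc d → Euc d →L[ℝ] Euc d) → ℝ≥0∞) : Prop :=
  ∀ (y : Euc d → Euc d) (G : Euc d → Euc d →L[ℝ] Euc d), MemW1p Ω p y G →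
    ∀ (yk : ℕ → Euc d → Euc d) (Gk : ℕ → Euc d → Euc d →L[ℝ] Euc d),
      (∀ k, MemW1p Ω p (yk k) (Gk k)) → WeakConvW1p Ω p yk Gk y G →
      F0 y G ≤ atTop.liminf fun k => Fk k (yk k) (Gk k)

/-- The Γ-limsup (recovery sequence) inequality (w.r.t. weak `W^{1,p}` convergence). -/
def GammaRecovery {d : ℕ} (Ω : Set (Euc d)) (p : ℝ)
    (Fk : ℕ → (Euc d → Euc d) → (Euc d → Euc d →L[ℝ] Euc d) → ℝ≥0∞)
    (F0 : (Euc d → Euc d) → (Euc d → Euc d →L[ℝ] Euc d) → ℝ≥0∞) : Prop :=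
  ∀ (y : Euc d → Euc d) (G : Euc d → Euc d →L[ℝ] Euc d), MemW1p Ω p y G →
    ∃ (yk : ℕ → Euc d → Euc d) (Gk : ℕ → Euc d → Euc d →L[ℝ] Euc d),
      (∀ k, MemW1p Ω p (yk k) (Gk k)) ∧ WeakConvW1p Ω p yk Gk y G ∧
      (atTop.limsup fun k => Fk k (yk k) (Gk k)) ≤ F0 y G

/-- Γ-convergence with respect to the weak topology of `W^{1,p}`. -/
def GammaConv {d : ℕ} (Ω : Set (Euc d)) (p : ℝ)
    (Fk : ℕ → (Euc d → Euc d) → (Euc d → Euc d →L[ℝ] Euc d) → ℝ≥0∞)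
    (F0 : (Euc d → Euc d) → (Euc d → Euc d →L[ℝ] Euc d) → ℝ≥0∞) : Prop :=
  GammaLiminf Ω p Fk F0 ∧ GammaRecovery Ω p Fk F0

/-- **Outer distortion bound (from the proof of `prop:homeo`).** For `d ≥ 2`:
(i) for every `ρ > 1` there is a constant `C_ρ > 0` depending only on `ρ` such that
for every `κ > 1` and every `F ∈ ℝ^{d×d}` with `det F > 0`, the outer distortion
`K^O(F) = |F|^d / det F` satisfies
`(K^O(F))^κ ≤ C_ρ (|F|^{dκρ} + (det F)^{-κρ/(ρ-1)})`;
(ii) consequently, if `p > d(d-1)` and `r > p(d-1)/(p-d(d-1))`, then for every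
`y ∈ W^{1,p}_+(Ω,ℝ^d)` on a bounded Lipschitz domain `Ω` with `𝓔(y) < ∞`, the outer
distortion `K^O(∇y)` lies in `L^κ(Ω)` with `κ = (1/r + d/p)⁻¹`, and `κ > d - 1`. -/
theorem outer_distortion_bound_and_integrability {d : ℕ} (hd : 2 ≤ d) :
    (∀ ρ : ℝ, 1 < ρ → ∃ C : ℝ, 0 < C ∧ ∀ κ : ℝ, 1 < κ →
      ∀ F : Euc d →L[ℝ] Euc d, 0 < LinearMap.det (F : Euc d →ₗ[ℝ] Euc d) →
        (‖F‖ ^ (d : ℝ) / LinearMap.det (F : Euc d →ₗ[ℝ] Euc d)) ^ κ ≤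
          C * (‖F‖ ^ ((d : ℝ) * κ * ρ) +
            LinearMap.det (F : Euc d →ₗ[ℝ] Euc d) ^ (-(κ * ρ / (ρ - 1))))) ∧
    (∀ (Ω : Set (Euc d)), IsLipschitzDomain Ω →
      ∀ p r : ℝ, (d : ℝ) * ((d : ℝ) - 1) < p →
        p * ((d : ℝ) - 1) / (p - (d : ℝ) * ((d : ℝ) - 1)) < r →
      ∀ (y : Euc d → Euc d) (G : Euc d → Euc d →L[ℝ] Euc d),
        MemW1pPlus Ω p y G → elastic Ω p r G < ⊤ →
        ((d : ℝ) - 1 < (1 / r + (d : ℝ) / p)⁻¹ ∧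
          (∫⁻ x in Ω, ENNReal.ofReal
            ((‖G x‖ ^ (d : ℝ) / jac G x) ^ ((1 / r + (d : ℝ) / p)⁻¹))) < ⊤)) :=  by
  have hD2 : (2:ℝ) ≤ (d:ℝ) := by exact_mod_cast hd
  have key : (∀ ρ : ℝ, 1 < ρ → ∃ C : ℝ, 0 < C ∧ ∀ κ : ℝ, 1 < κ →
      ∀ F : Euc d →L[ℝ] Euc d, 0 < LinearMap.det (F : Euc d →ₗ[ℝ] Euc d) →
        (‖F‖ ^ (d : ℝ) / LinearMap.det (F : Euc d →ₗ[ℝ] Euc d)) ^ κ ≤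
          C * (‖F‖ ^ ((d : ℝ) * κ * ρ) +
            LinearMap.det (F : Euc d →ₗ[ℝ] Euc d) ^ (-(κ * ρ / (ρ - 1))))) := by
    intro ρ hρ
    refine ⟨1, one_pos, ?_⟩
    intro κ hκ F hF
    set b := LinearMap.det ((F : Euc d →ₗ[ℝ] Euc d)) with hbdef
    have hb : 0 < b := hF
    have hq : ρ.HolderConjugate (ρ / (ρ - 1)) := Real.HolderConjugate.conjExponent hρ
    have hnn : (0:ℝ) ≤ ‖F‖ := norm_nonneg F
    have ha : (0:ℝ) ≤ (‖F‖ ^ (d:ℝ)) ^ κ := Real.rpow_nonneg (Real.rpow_nonneg hnn _) _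
    have hbn : (0:ℝ) ≤ b ^ (-κ) := Real.rpow_nonneg hb.le _
    have young := Real.young_inequality_of_nonneg ha hbn hq
    have hq1 : 1 ≤ ρ / (ρ - 1) := hq.symm.lt.le
    calc (‖F‖ ^ (d:ℝ) / b) ^ κ
        = (‖F‖ ^ (d:ℝ)) ^ κ * b ^ (-κ) := by
          rw [Real.div_rpow (Real.rpow_nonneg hnn _) hb.le, Real.rpow_neg hb.le,
            div_eq_mul_inv]
      _ ≤ ((‖F‖ ^ (d:ℝ)) ^ κ) ^ ρ / ρ + (b ^ (-κ)) ^ (ρ / (ρ - 1)) / (ρ / (ρ - 1)) := young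
      _ ≤ ((‖F‖ ^ (d:ℝ)) ^ κ) ^ ρ + (b ^ (-κ)) ^ (ρ / (ρ - 1)) :=
          add_le_add (div_le_self (Real.rpow_nonneg ha _) hρ.le)
            (div_le_self (Real.rpow_nonneg hbn _) hq1)
      _ = 1 * (‖F‖ ^ ((d : ℝ) * κ * ρ) + b ^ (-(κ * ρ / (ρ - 1)))) := by
          rw [one_mul, ← Real.rpow_mul hnn, ← Real.rpow_mul hnn, ← Real.rpow_mul hb.le,
            mul_assoc]
          congr 1
          congr 1
          ring
  refine ⟨key, ?_⟩
  intro Ω hΩ p r hp hr y G hy hE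
  have hDm1 : (0:ℝ) < (d:ℝ) - 1 := by linarith
  have hdd : (0:ℝ) < (d:ℝ) * ((d:ℝ) - 1) := by positivity
  have hp0 : (0:ℝ) < p := hdd.trans hp
  have hden : (0:ℝ) < p - (d:ℝ) * ((d:ℝ) - 1) := by linarith
  have hr0 : (0:ℝ) < r := (div_pos (by positivity) hden).trans hr
  have hD0 : (0:ℝ) < (d:ℝ) := by linarith
  set κ := (1 / r + (d:ℝ) / p)⁻¹ with hκdef
  have hs0 : (0:ℝ) < 1 / r + (d:ℝ) / p := by positivity
  have h1r : 1 / r < (p - (d:ℝ)*((d:ℝ)-1)) / (p*((d:ℝ)-1)) := by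
    rw [div_lt_div_iff₀ hr0 (by positivity)]
    have h := (div_lt_iff₀ hden).mp hr
    nlinarith
  have hsl : 1 / r + (d:ℝ)/p < ((d:ℝ)-1)⁻¹ := by
    have heq : ((d:ℝ)-1)⁻¹ = (p - (d:ℝ)*((d:ℝ)-1)) / (p*((d:ℝ)-1)) + (d:ℝ)/p := by
      field_simp
      ring
    rw [heq]
    exact add_lt_add_of_lt_of_le h1r le_rfl
  have hκgt : (d:ℝ) - 1 < κ := by
    have h := inv_strictAnti₀ hs0 hsl
    rwa [inv_inv] at h
  have hκ1 : 1 < κ := by linarith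
  refine ⟨hκgt, ?_⟩
  set ρ := 1 + p / ((d:ℝ) * r) with hρdef
  have hρ1 : 1 < ρ := by
    have h : 0 < p / ((d:ℝ)*r) := by positivity
    rw [hρdef]; linarith
  obtain ⟨C, hC, hbound⟩ := key ρ hρ1
  have hrne : r ≠ 0 := hr0.ne'
  have hpne : p ≠ 0 := hp0.ne'
  have hdne : (d:ℝ) ≠ 0 := hD0.ne'
  have hsne : (1/r + (d:ℝ)/p) ≠ 0 := hs0.ne'
  have he1 : (d:ℝ) * κ * ρ = p := by
    rw [hκdef, hρdef]; field_simp; ring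
  have he2 : -(κ * ρ / (ρ - 1)) = -r := by
    rw [hκdef, hρdef]
    have hρm1 : (1 + p / ((d:ℝ) * r)) - 1 = p / ((d:ℝ)*r) := by ring
    rw [hρm1]
    field_simp
    ring
  obtain ⟨⟨hym, hGm, hyint, hGint, hweak⟩, hjacpos⟩ := hy
  have hf : AEMeasurable (fun x => ((‖G x‖₊ : ℝ≥0∞)) ^ p) (volume.restrict Ω) :=
    hGm.enorm.pow_const p
  unfold elastic at hE
  obtain ⟨hI1, hI2⟩ := ENNReal.add_lt_top.mp hE
  have habound : ∀ᵐ x ∂(volume.restrict Ω),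
      ENNReal.ofReal ((‖G x‖ ^ (d:ℝ) / jac G x) ^ κ) ≤
      ENNReal.ofReal C * (((‖G x‖₊ : ℝ≥0∞)) ^ p +
        (if 0 < jac G x then ENNReal.ofReal (jac G x ^ (-r)) else (⊤:ℝ≥0∞))) := by
    filter_upwards [hjacpos] with x hx
    rw [if_pos hx]
    have hpt : (‖G x‖ ^ (d:ℝ) / jac G x) ^ κ ≤
        C * (‖G x‖ ^ ((d:ℝ) * κ * ρ) + jac G x ^ (-(κ * ρ / (ρ - 1)))) :=
      hbound κ hκ1 (G x) hx
    rw [he1, he2] at hpt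
    calc ENNReal.ofReal ((‖G x‖ ^ (d:ℝ) / jac G x) ^ κ)
        ≤ ENNReal.ofReal (C * (‖G x‖ ^ p + jac G x ^ (-r))) := ENNReal.ofReal_le_ofReal hpt
      _ = ENNReal.ofReal C * (ENNReal.ofReal (‖G x‖ ^ p) + ENNReal.ofReal (jac G x ^ (-r))) := by
          rw [ENNReal.ofReal_mul hC.le,
            ENNReal.ofReal_add (Real.rpow_nonneg (norm_nonneg _) _) (Real.rpow_nonneg hx.le _)]
      _ = ENNReal.ofReal C * (((‖G x‖₊ : ℝ≥0∞)) ^ p + ENNReal.ofReal (jac G x ^ (-r))) := by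
          rw [← ENNReal.ofReal_rpow_of_nonneg (norm_nonneg _) hp0.le,
            ofReal_norm, enorm_eq_nnnorm]
  calc ∫⁻ x in Ω, ENNReal.ofReal ((‖G x‖ ^ (d:ℝ) / jac G x) ^ κ)
      ≤ ∫⁻ x in Ω, ENNReal.ofReal C * (((‖G x‖₊ : ℝ≥0∞)) ^ p +
          (if 0 < jac G x then ENNReal.ofReal (jac G x ^ (-r)) else (⊤:ℝ≥0∞))) :=
        lintegral_mono_ae habound
    _ = ENNReal.ofReal C * ∫⁻ x in Ω, (((‖G x‖₊ : ℝ≥0∞)) ^ p +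
          (if 0 < jac G x then ENNReal.ofReal (jac G x ^ (-r)) else (⊤:ℝ≥0∞))) :=
        lintegral_const_mul' _ _ ENNReal.ofReal_ne_top
    _ = ENNReal.ofReal C * ((∫⁻ x in Ω, ((‖G x‖₊ : ℝ≥0∞)) ^ p) +
          ∫⁻ x in Ω, (if 0 < jac G x then ENNReal.ofReal (jac G x ^ (-r)) else (⊤:ℝ≥0∞))) := by
        rw [lintegral_add_left' hf]
    _ < ⊤ := ENNReal.mul_lt_top ENNReal.ofReal_lt_top (ENNReal.add_lt_top.mpr ⟨hI1, hI2⟩)
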